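/- Let λ = (λ₁ ≥ ⋯ ≥ λ_r > 0) be a partition of length r ≥ 1 with flagging f = (f₁ ≤ ⋯ ≤ f_r). Assume λ₁ > λ₂ and f₁ < f₂, where by convention λ₂ = 0 and the condition f₁ < f₂ is vacuous when r = 1. Set λ' = (λ₁−1, λ₂, …, λ_r) (regarded as a partition, discarding a trailing zero when λ₁ = 1, in which case r = 1 and λ' is the empty partition) and f' = (f₁+1, f₂, …, f_r). Then π_{f₁}(G̃_{λ,f}) = G̃_{λ',f'}. -/

import Mathlib

/- Common setup: `R = ℤ[β][[x₀,x₁,x₂,…]]` with `β = Polynomial.X`; only the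
variables `x i` for `i ≥ 1` are used in the statements. -/

attribute [local instance] Classical.propDecidable

noncomputable section

abbrev A : Type := Polynomial ℤ
abbrev R : Type := MvPowerSeries ℕ A

/-- the element β -/
def bR : R := MvPowerSeries.C (σ := ℕ) (R := A) Polynomial.X

/-- the variable `x i` -/
def Xv (i : ℕ) : R := MvPowerSeries.X i

/-- total degree of a monomial -/
def degSum (d : ℕ →₀ ℕ) : ℕ := d.sum fun _ n => n

/-- the ring automorphism `s i` exchanging `x i` and `x (i+1)` -/
def sOp (i : ℕ) (f : R) : R := fun d => f (Finsupp.equivMapDomain (Equiv.swap i (i+1)) d)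

/-- the divided difference operator `π i`, characterized by
`(x i - x (i+1)) * π i f = (1 + β x (i+1)) f - (1 + β x i) (s i f)`. -/
def ddiff (i : ℕ) (f : R) : R :=
  Classical.epsilon fun gq : R =>
    (Xv i - Xv (i+1)) * gq = (1 + bR * Xv (i+1)) * f - (1 + bR * Xv i) * sOp i f

/-- complete homogeneous symmetric function of degree `j` in the variables `x_q, …, x_p` -/
def hsym (q p : ℕ) (j : ℤ) : R := fun d =>
  if (∀ k ∈ d.support, q ≤ k ∧ k ≤ p) ∧ (degSum d : ℤ) = j then 1 else 0

/-- `∏_{i=q}^{p} (1 + β x_i)` -/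
def prodOneAdd (q p : ℕ) : R := ∏ i ∈ Finset.Icc q p, (1 + bR * Xv i)

/-- `G_m^{[p/q]} = Σ_{s≥0} (−β)^s (∏_{i=q}^p (1+βx_i)) h_{m+s}(x_q,…,x_p)`,
defined coefficientwise (only the terms with `m + s ≤ deg d` can contribute to the
coefficient at a monomial `d`). -/
def Gsk (p q : ℕ) (m : ℤ) : R := fun d =>
  ∑ s ∈ Finset.range (((degSum d : ℤ) - m).toNat + 1),
    (-Polynomial.X : A) ^ s * MvPowerSeries.coeff (R := A) d (prodOneAdd q p * hsym q p (m + s))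

/-- `G_m^{[p]} = G_m^{[p/1]}` -/
def Gk (p : ℕ) (m : ℤ) : R := Gsk p 1 m

/-- the geometric series `Σ_{s≥0} (−β x_i)^s = 1/(1+βx_i)` -/
def geom (i : ℕ) : R := fun d =>
  if d.support ⊆ {i} then (-Polynomial.X : A) ^ (d i) else 0

/-- substitution of `x₁ = 0` -/
def setX1Zero (f : R) : R := fun d => if d 1 = 0 then f d else 0

/-- generalized binomial coefficient `C(c,s) = c(c−1)⋯(c−s+1)/s!` for `c : ℤ` -/
def intChoose (c : ℤ) (s : ℕ) : ℤ :=
  if 0 ≤ c then (c.toNat.choose s : ℤ) else (-1) ^ s * (((s : ℤ) - 1 - c).toNat.choose s : ℤ)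

/-- `Σ_{s≥0} C(c,s) β^s G_{m+s}^{[p/q]}`, defined coefficientwise. -/
def JT (p q : ℕ) (c m : ℤ) : R := fun d =>
  ∑ s ∈ Finset.range (((degSum d : ℤ) - m).toNat + 1),
    ((intChoose c s : ℤ) : A) * Polynomial.X ^ s * MvPowerSeries.coeff (R := A) d (Gsk p q (m + s))

/-- the Jacobi–Trudi type determinant `G̃_{λ/μ,f/g}` (rows and columns indexed by
`Fin r`, with `i : Fin r` representing the 1-based index `i+1`). -/
def GtildeSkew (r : ℕ) (lam mu f g : Fin r → ℕ) : R :=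
  Matrix.det (Matrix.of fun i j : Fin r =>
    JT (f i) (g j) ((i : ℤ) - (j : ℤ))
      ((lam i : ℤ) - (mu j : ℤ) + (j : ℤ) - (i : ℤ)))

/-- the Jacobi–Trudi type determinant `G̃_{λ,f}` -/
def Gtilde (r : ℕ) (lam f : Fin r → ℕ) : R :=
  GtildeSkew r lam (fun _ => 0) f (fun _ => 1)

/-- flagged skew set-valued tableaux of shape `λ/μ` with flagging `f/g`:
a tableau assigns to the box in row `i` (1-based index `i+1`), column `j`
(with `μᵢ < j ≤ λᵢ`) a nonempty subset of `{gᵢ,…,fᵢ}`, weakly increasing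
along rows and strictly increasing along columns; boxes outside the shape
carry `∅`. -/
def IsFSVT (r : ℕ) (lam mu f g : Fin r → ℕ) (T : Fin r × ℕ → Finset ℕ) : Prop :=
  (∀ (i : Fin r) (j : ℕ), ¬ (mu i < j ∧ j ≤ lam i) → T (i, j) = ∅) ∧
  (∀ (i : Fin r) (j : ℕ), mu i < j → j ≤ lam i → (T (i, j)).Nonempty) ∧
  (∀ (i : Fin r) (j k : ℕ), k ∈ T (i, j) → g i ≤ k ∧ k ≤ f i) ∧
  (∀ (i : Fin r) (j : ℕ), mu i < j → j + 1 ≤ lam i →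
     ∀ a ∈ T (i, j), ∀ b ∈ T (i, j + 1), a ≤ b) ∧
  (∀ (i : Fin r) (h : (i : ℕ) + 1 < r) (j : ℕ),
     mu i < j → j ≤ lam i → mu ⟨(i : ℕ) + 1, h⟩ < j → j ≤ lam ⟨(i : ℕ) + 1, h⟩ →
     ∀ a ∈ T (i, j), ∀ b ∈ T (⟨(i : ℕ) + 1, h⟩, j), a < b)

/-- the total number `|T|` of entries of a tableau -/
def entriesCount (r : ℕ) (lam mu : Fin r → ℕ) (T : Fin r × ℕ → Finset ℕ) : ℕ :=
  ∑ i : Fin r, ∑ j ∈ Finset.Ioc (mu i) (lam i), (T (i, j)).card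

/-- `|λ/μ|` -/
def shapeSize (r : ℕ) (lam mu : Fin r → ℕ) : ℕ := ∑ i : Fin r, (lam i - mu i)

/-- the weight `β^{|T|−|λ/μ|} ∏_{k∈T} x_k` of a tableau -/
def wt (r : ℕ) (lam mu : Fin r → ℕ) (T : Fin r × ℕ → Finset ℕ) : R :=
  bR ^ (entriesCount r lam mu T - shapeSize r lam mu) *
    ∏ i : Fin r, ∏ j ∈ Finset.Ioc (mu i) (lam i), ∏ k ∈ T (i, j), Xv k

/-- the flagged skew Grothendieck polynomial `G_{λ/μ,f/g}` as the (finite) sum of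
the weights of all flagged skew set-valued tableaux -/
def GF (r : ℕ) (lam mu f g : Fin r → ℕ) : R :=
  ∑ᶠ (T : Fin r × ℕ → Finset ℕ) (_ : IsFSVT r lam mu f g T), wt r lam mu T

/- permutations: `w ∈ S_n` is encoded as a permutation of `ℕ` fixing `0` and
everything `> n`. -/

/-- `w` belongs to `S_n` -/
def isSn (n : ℕ) (w : Equiv.Perm ℕ) : Prop := ∀ k, k = 0 ∨ n < k → w k = k

/-- Coxeter length = number of inversions -/
def len (n : ℕ) (w : Equiv.Perm ℕ) : ℕ :=
  (((Finset.Icc 1 n) ×ˢ (Finset.Icc 1 n)).filter fun pr : ℕ × ℕ =>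
    pr.1 < pr.2 ∧ w pr.2 < w pr.1).card

/-- the rank function `r_w(p,q) = #{i ≤ p : w(i) ≤ q}` -/
def rankf (w : Equiv.Perm ℕ) (p q : ℕ) : ℕ :=
  ((Finset.Icc 1 p).filter fun i => w i ≤ q).card

/-- the diagram `D(w)` -/
def inD (n : ℕ) (w : Equiv.Perm ℕ) (p q : ℕ) : Prop :=
  1 ≤ p ∧ p ≤ n ∧ 1 ≤ q ∧ q ≤ n ∧ q < w p ∧ p < w.symm q

/-- the essential set `Ess(w)` -/
def inEss (n : ℕ) (w : Equiv.Perm ℕ) (p q : ℕ) : Prop :=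
  inD n w p q ∧ ¬ inD n w (p+1) q ∧ ¬ inD n w p (q+1)

/-- `w ∈ S_n` is vexillary: it avoids the pattern 2143 -/
def Vexillary (n : ℕ) (w : Equiv.Perm ℕ) : Prop :=
  ¬ ∃ a b c d : ℕ, 1 ≤ a ∧ a < b ∧ b < c ∧ c < d ∧ d ≤ n ∧
      w b < w a ∧ w a < w d ∧ w d < w c

section Aux
open MvPowerSeries Finsupp Polynomial

lemma capp (f : R) (d : ℕ →₀ ℕ) : MvPowerSeries.coeff (R := A) d f = f d := rfl

lemma degSum_add (a b : ℕ →₀ ℕ) : degSum (a + b) = degSum a + degSum b := by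
  unfold degSum; exact Finsupp.sum_add_index' (fun _ => rfl) (fun _ _ _ => rfl)

lemma degSum_emd (e : Equiv.Perm ℕ) (d : ℕ →₀ ℕ) :
    degSum (Finsupp.equivMapDomain e d) = degSum d := by
  unfold degSum
  exact Finsupp.sum_equivMapDomain e d _

lemma degSum_single (i n : ℕ) : degSum (Finsupp.single i n) = n := by
  unfold degSum; simp

-- coefficient of X i * F
lemma coeff_Xv_mul (i : ℕ) (F : R) (d : ℕ →₀ ℕ) :
    (Xv i * F) d = if d i = 0 then 0 else F (d - Finsupp.single i 1) := by
  classical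
  rw [show (Xv i * F) d = MvPowerSeries.coeff (R := A) d (Xv i * F) from rfl, Xv,
    MvPowerSeries.coeff_mul]
  by_cases h : d i = 0
  · simp only [h, if_true]
    apply Finset.sum_eq_zero
    intro p hp
    rw [Finset.HasAntidiagonal.mem_antidiagonal] at hp
    rw [MvPowerSeries.coeff_X]
    by_cases h1 : p.1 = Finsupp.single i 1
    · exfalso
      have : d i = p.1 i + p.2 i := by rw [← hp]; simp
      rw [h1] at this; simp [h] at this; omega
    · simp [h1]
  · rw [if_neg h]
    have hd : Finsupp.single i 1 + (d - Finsupp.single i 1) = d := by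
      ext k
      simp only [Finsupp.add_apply, Finsupp.tsub_apply]
      rcases eq_or_ne k i with rfl | hk
      · simp; omega
      · simp [Finsupp.single_eq_of_ne' (Ne.symm hk)]
    rw [Finset.sum_eq_single (Finsupp.single i 1, d - Finsupp.single i 1)]
    · rw [MvPowerSeries.coeff_X]; simp [capp]
    · intro p hp hne
      rw [Finset.HasAntidiagonal.mem_antidiagonal] at hp
      rw [MvPowerSeries.coeff_X]
      by_cases h1 : p.1 = Finsupp.single i 1
      · exfalso; apply hne
        have : p.2 = d - Finsupp.single i 1 := by
          have := hp; rw [h1] at this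
          ext k; have := congrArg (fun g => g k) this
          simp only [Finsupp.add_apply] at this
          simp only [Finsupp.tsub_apply]; omega
        rw [Prod.ext_iff]; exact ⟨h1, this⟩
      · simp [h1]
    · intro hmem
      exfalso; apply hmem
      rw [Finset.HasAntidiagonal.mem_antidiagonal]; exact hd

lemma coeff_bR_mul (F : R) (d : ℕ →₀ ℕ) :
    (bR * F) d = Polynomial.X * F d := by
  rw [show (bR * F) d = MvPowerSeries.coeff (R := A) d (bR * F) from rfl, bR,
    MvPowerSeries.coeff_C_mul, capp]

lemma degSum_sub_single (d : ℕ →₀ ℕ) (i : ℕ) (h : d i ≠ 0) :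
    degSum (d - Finsupp.single i 1) = degSum d - 1 := by
  have : (d - Finsupp.single i 1) + Finsupp.single i 1 = d := by
    ext k
    simp only [Finsupp.add_apply, Finsupp.tsub_apply]
    rcases eq_or_ne k i with rfl | hk
    · simp; omega
    · simp [Finsupp.single_eq_of_ne' (Ne.symm hk)]
  have h2 := congrArg degSum this
  rw [degSum_add, degSum_single] at h2
  omega

end Aux
section Aux2
open MvPowerSeries Finsupp Polynomial

lemma sOp_apply (i : ℕ) (F : R) (d : ℕ →₀ ℕ) :
    sOp i F d = F (Finsupp.equivMapDomain (Equiv.swap i (i+1)) d) := rfl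

lemma emd_add (e : Equiv.Perm ℕ) (a b : ℕ →₀ ℕ) :
    Finsupp.equivMapDomain e (a + b)
      = Finsupp.equivMapDomain e a + Finsupp.equivMapDomain e b := by
  ext k; simp [Finsupp.equivMapDomain_apply]

lemma emd_inj (e : Equiv.Perm ℕ) {a b : ℕ →₀ ℕ}
    (h : Finsupp.equivMapDomain e a = Finsupp.equivMapDomain e b) : a = b := by
  ext k
  have := congrArg (fun g => g (e k)) h
  simpa [Finsupp.equivMapDomain_apply] using this

lemma sOp_add (i : ℕ) (F G : R) : sOp i (F + G) = sOp i F + sOp i G := rfl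

lemma sOp_mul (i : ℕ) (F G : R) : sOp i (F * G) = sOp i F * sOp i G := by
  classical
  funext d
  set e := Equiv.swap i (i+1) with he
  rw [sOp_apply, show ∀ x, (F * G) x = MvPowerSeries.coeff (R := A) x (F * G) from fun _ => rfl,
    MvPowerSeries.coeff_mul,
    show (sOp i F * sOp i G) d = MvPowerSeries.coeff (R := A) d (sOp i F * sOp i G) from rfl,
    MvPowerSeries.coeff_mul]
  refine (Finset.sum_equiv
    (Equiv.prodCongr (Finsupp.domCongr (M := ℕ) e).toEquiv
      (Finsupp.domCongr (M := ℕ) e).toEquiv) ?_ ?_).symm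
  · intro x
    simp only [Finset.HasAntidiagonal.mem_antidiagonal, Equiv.prodCongr_apply, Prod.map]
    constructor
    · intro h
      show Finsupp.equivMapDomain e x.1 + Finsupp.equivMapDomain e x.2 = _
      rw [← emd_add, h]
    · intro h
      apply emd_inj e
      rw [emd_add]; exact h
  · intro x _
    rfl

lemma sOp_one (i : ℕ) : sOp i (1 : R) = 1 := by
  classical
  funext d
  rw [sOp_apply, show ∀ x : ℕ →₀ ℕ, (1 : R) x = MvPowerSeries.coeff (R := A) x 1 from fun _ => rfl,
    show (1 : R) d = MvPowerSeries.coeff (R := A) d 1 from rfl,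
    MvPowerSeries.coeff_one, MvPowerSeries.coeff_one]
  congr 1
  simp only [eq_iff_iff]
  constructor
  · intro h
    apply emd_inj (Equiv.swap i (i+1))
    rw [h]; ext k; simp [Finsupp.equivMapDomain_apply]
  · intro h; rw [h]; ext k; simp [Finsupp.equivMapDomain_apply]

lemma sOp_zero (i : ℕ) : sOp i (0 : R) = 0 := rfl

/-- `sOp i` as a ring homomorphism -/
def sHom (i : ℕ) : R →+* R where
  toFun := sOp i
  map_one' := sOp_one i
  map_mul' := sOp_mul i
  map_zero' := sOp_zero i
  map_add' := sOp_add i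

lemma sHom_apply (i : ℕ) (F : R) : sHom i F = sOp i F := rfl

lemma sOp_bR_mul (i : ℕ) (F : R) : sOp i (bR * F) = bR * sOp i F := by
  funext d
  rw [sOp_apply, coeff_bR_mul, coeff_bR_mul, sOp_apply]

lemma emd_single (e : Equiv.Perm ℕ) (j n : ℕ) :
    Finsupp.equivMapDomain e (Finsupp.single j n) = Finsupp.single (e j) n :=
  Finsupp.equivMapDomain_single e j n

lemma sOp_X (i j : ℕ) : sOp i (Xv j) = Xv (Equiv.swap i (i+1) j) := by
  classical
  funext d
  set e := Equiv.swap i (i+1) with he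
  rw [sOp_apply, Xv,
    show ∀ x : ℕ →₀ ℕ, (MvPowerSeries.X j : R) x = MvPowerSeries.coeff (R := A) x (MvPowerSeries.X j)
      from fun _ => rfl,
    MvPowerSeries.coeff_X,
    show (Xv (e j)) d = MvPowerSeries.coeff (R := A) d (MvPowerSeries.X (e j)) from rfl,
    MvPowerSeries.coeff_X]
  congr 1
  simp only [eq_iff_iff]
  constructor
  · intro h
    apply emd_inj e
    rw [h, emd_single]
    simp [he, Equiv.swap_apply_self]
  · intro h
    rw [h, emd_single]
    simp [he, Equiv.swap_apply_self]

lemma emd_sub_single (e : Equiv.Perm ℕ) (d : ℕ →₀ ℕ) (j : ℕ) :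
    Finsupp.equivMapDomain e (d - Finsupp.single j 1)
      = Finsupp.equivMapDomain e d - Finsupp.single (e j) 1 := by
  ext k
  simp only [Finsupp.equivMapDomain_apply, Finsupp.tsub_apply]
  congr 1
  rcases eq_or_ne k (e j) with rfl | hk
  · simp
  · rw [Finsupp.single_eq_of_ne' (Ne.symm hk), Finsupp.single_eq_of_ne']
    intro hj; apply hk
    rw [hj]; simp

lemma emd_apply_self (e : Equiv.Perm ℕ) (d : ℕ →₀ ℕ) (j : ℕ) :
    Finsupp.equivMapDomain e d (e j) = d j := by
  simp [Finsupp.equivMapDomain_apply]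

end Aux2
section Aux3
open MvPowerSeries Finsupp Polynomial

lemma apply_le_degSum (d : ℕ →₀ ℕ) (k : ℕ) : d k ≤ degSum d := by
  by_cases h : k ∈ d.support
  · exact Finset.single_le_sum (f := fun j => d j) (fun _ _ => Nat.zero_le _) h
  · rw [Finsupp.notMem_support_iff] at h; rw [h]; exact Nat.zero_le _

lemma coeff_PH_vanish (q p : ℕ) (j : ℤ) (d : ℕ →₀ ℕ) (h : (degSum d : ℤ) < j) :
    MvPowerSeries.coeff (R := A) d (prodOneAdd q p * hsym q p j) = 0 := by
  classical
  rw [MvPowerSeries.coeff_mul]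
  apply Finset.sum_eq_zero
  intro x hx
  rw [Finset.HasAntidiagonal.mem_antidiagonal] at hx
  have h2 : MvPowerSeries.coeff (R := A) x.2 (hsym q p j) = 0 := by
    rw [capp]
    simp only [hsym]
    rw [if_neg]
    rintro ⟨-, h3⟩
    have hle : degSum x.2 ≤ degSum d := by
      rw [← hx, degSum_add]; omega
    omega
  rw [h2, mul_zero]

/-- the core combinatorial identity (‡) -/
lemma hsym_swap_identity (P : ℕ) (hP : 1 ≤ P) (m : ℤ) :
    (Xv P - Xv (P+1)) * hsym 1 (P+1) (m-1) = hsym 1 P m - sOp P (hsym 1 P m) := by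
  classical
  funext d
  set e := Equiv.swap P (P+1) with he
  set S : Prop := ∀ k, d k ≠ 0 → 1 ≤ k ∧ k ≤ P + 1 with hS
  have hsupR : ∀ (Q : ℕ) (x : ℕ →₀ ℕ),
      (∀ k ∈ x.support, 1 ≤ k ∧ k ≤ Q) ↔ (∀ k, x k ≠ 0 → 1 ≤ k ∧ k ≤ Q) := by
    intro Q x
    constructor
    · intro h k hk; exact h k (Finsupp.mem_support_iff.mpr hk)
    · intro h k hk; exact h k (Finsupp.mem_support_iff.mp hk)
  have key : ∀ i : ℕ, i = P ∨ i = P + 1 →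
      (Xv i * hsym 1 (P+1) (m-1)) d
        = if d i = 0 then 0 else (if S ∧ (degSum d : ℤ) = m then 1 else 0) := by
    intro i hi
    rw [coeff_Xv_mul]
    by_cases hz : d i = 0
    · simp [hz]
    · rw [if_neg hz, if_neg hz]
      simp only [hsym]
      have hdeg : degSum (d - Finsupp.single i 1) = degSum d - 1 := degSum_sub_single d i hz
      have hpos : 1 ≤ degSum d := le_trans (Nat.one_le_iff_ne_zero.mpr hz) (apply_le_degSum d i)
      have happ : ∀ k : ℕ, k ≠ i → (d - Finsupp.single i 1 : ℕ →₀ ℕ) k = d k := by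
        intro k hki
        rw [Finsupp.tsub_apply, Finsupp.single_eq_of_ne' (Ne.symm hki)]
        omega
      congr 1
      simp only [eq_iff_iff]
      rw [hsupR]
      constructor
      · rintro ⟨h1, h2⟩
        constructor
        · intro k hk
          by_cases hki : k = i
          · subst hki
            rcases hi with rfl | rfl <;> omega
          · exact h1 k (by rw [happ k hki]; exact hk)
        · rw [hdeg] at h2; omega
      · rintro ⟨h1, h2⟩
        constructor
        · intro k hk
          apply h1
          by_cases hki : k = i
          · subst hki
            rw [Finsupp.tsub_apply] at hk; omega
          · rw [happ k hki] at hk; exact hk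
        · rw [hdeg]; omega
  have hXP := key P (Or.inl rfl)
  have hXP1 := key (P+1) (Or.inr rfl)
  have hT3 : hsym 1 P m d
      = if (S ∧ d (P+1) = 0) ∧ (degSum d : ℤ) = m then 1 else 0 := by
    simp only [hsym]
    congr 1
    simp only [eq_iff_iff]
    rw [hsupR]
    constructor
    · rintro ⟨h1, h2⟩
      refine ⟨⟨fun k hk => by have := h1 k hk; omega, ?_⟩, h2⟩
      by_contra hb0
      have := h1 (P+1) hb0
      omega
    · rintro ⟨⟨h1, hb0⟩, h2⟩
      refine ⟨fun k hk => ?_, h2⟩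
      have h3 := h1 k hk
      have : k ≠ P + 1 := fun hkk => hk (hkk ▸ hb0)
      omega
  have hT4 : sOp P (hsym 1 P m) d
      = if (S ∧ d P = 0) ∧ (degSum d : ℤ) = m then 1 else 0 := by
    rw [sOp_apply, ← he]
    simp only [hsym]
    have hdege : degSum (Finsupp.equivMapDomain e d) = degSum d := degSum_emd e d
    have happ : ∀ k, (Finsupp.equivMapDomain e d) k = d (e k) := by
      intro k
      rw [Finsupp.equivMapDomain_apply, he, Equiv.symm_swap]
    have heP : e P = P + 1 := by rw [he]; exact Equiv.swap_apply_left _ _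
    have heP1 : e (P+1) = P := by rw [he]; exact Equiv.swap_apply_right _ _
    have heo : ∀ k, k ≠ P → k ≠ P + 1 → e k = k := by
      intro k h1 h2; rw [he]; exact Equiv.swap_apply_of_ne_of_ne h1 h2
    congr 1
    simp only [eq_iff_iff]
    rw [hsupR, hdege]
    constructor
    · rintro ⟨h1, h2⟩
      refine ⟨⟨fun k hk => ?_, ?_⟩, h2⟩
      · by_cases hkP : k = P
        · subst hkP; omega
        · by_cases hkP1 : k = P + 1
          · subst hkP1
            have := h1 P (by rw [happ, heP]; exact hk)
            omega
          · have := h1 k (by rw [happ, heo k hkP hkP1]; exact hk)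
            omega
      · by_contra ha0
        have := h1 (P+1) (by rw [happ, heP1]; exact ha0)
        omega
    · rintro ⟨⟨h1, ha0⟩, h2⟩
      refine ⟨fun k hk => ?_, h2⟩
      rw [happ] at hk
      by_cases hkP : k = P
      · subst hkP; omega
      · by_cases hkP1 : k = P + 1
        · exfalso; apply hk; subst hkP1; rw [heP1]; exact ha0
        · rw [heo k hkP hkP1] at hk
          have := h1 k hk
          omega
  have lhs_eq : ((Xv P - Xv (P+1)) * hsym 1 (P+1) (m-1)) d
      = (Xv P * hsym 1 (P+1) (m-1)) d - (Xv (P+1) * hsym 1 (P+1) (m-1)) d := by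
    rw [sub_mul]; rfl
  have rhs_eq : (hsym 1 P m - sOp P (hsym 1 P m)) d
      = hsym 1 P m d - sOp P (hsym 1 P m) d := rfl
  rw [lhs_eq, rhs_eq, hXP, hXP1, hT3, hT4]
  by_cases hSm : S ∧ (degSum d : ℤ) = m
  · by_cases ha0 : d P = 0 <;> by_cases hb0 : d (P+1) = 0 <;>
      simp [ha0, hb0, hSm, hSm.1, hSm.2]
  · have h1 : ¬ ((S ∧ d (P+1) = 0) ∧ (degSum d : ℤ) = m) := by tauto
    have h2 : ¬ ((S ∧ d P = 0) ∧ (degSum d : ℤ) = m) := by tauto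
    by_cases ha0 : d P = 0 <;> by_cases hb0 : d (P+1) = 0 <;>
      simp [ha0, hb0, hSm, h1, h2]
end Aux3
section Aux4
open MvPowerSeries Finsupp Polynomial

lemma Gsk_eq_sum (p q : ℕ) (k : ℤ) (d : ℕ →₀ ℕ) (N : ℕ)
    (hN : ((degSum d : ℤ) - k).toNat + 1 ≤ N) :
    Gsk p q k d = ∑ s ∈ Finset.range N,
      (-Polynomial.X : A) ^ s * MvPowerSeries.coeff (R := A) d (prodOneAdd q p * hsym q p (k + s)) := by
  simp only [Gsk]
  apply Finset.sum_subset (Finset.range_subset_range.mpr hN)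
  intro s _ hs
  rw [coeff_PH_vanish, mul_zero]
  rw [Finset.mem_range, not_lt] at hs
  have h1 := Int.self_le_toNat ((degSum d : ℤ) - k)
  omega

lemma Gsk_vanish (p q : ℕ) (k : ℤ) (d : ℕ →₀ ℕ) (h : (degSum d : ℤ) < k) :
    Gsk p q k d = 0 := by
  simp only [Gsk]
  apply Finset.sum_eq_zero
  intro s _
  rw [coeff_PH_vanish, mul_zero]
  omega

lemma coeff_oneAdd_mul (i : ℕ) (F : R) (d : ℕ →₀ ℕ) :
    ((1 + bR * Xv i) * F) d
      = F d + Polynomial.X * (if d i = 0 then 0 else F (d - Finsupp.single i 1)) := by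
  have h : (1 + bR * Xv i) * F = F + bR * (Xv i * F) := by ring
  rw [h, show (F + bR * (Xv i * F)) d = F d + (bR * (Xv i * F)) d from rfl,
    coeff_bR_mul, coeff_Xv_mul]

lemma coeff_subX_mul (i j : ℕ) (F : R) (d : ℕ →₀ ℕ) :
    ((Xv i - Xv j) * F) d
      = (if d i = 0 then 0 else F (d - Finsupp.single i 1))
        - (if d j = 0 then 0 else F (d - Finsupp.single j 1)) := by
  rw [sub_mul, show (Xv i * F - Xv j * F) d = (Xv i * F) d - (Xv j * F) d from rfl,
    coeff_Xv_mul, coeff_Xv_mul]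

lemma Gsk_telescope (p q : ℕ) (m : ℤ) :
    Gsk p q m + bR * Gsk p q (m+1) = prodOneAdd q p * hsym q p m := by
  funext d
  rw [show (Gsk p q m + bR * Gsk p q (m+1)) d = Gsk p q m d + (bR * Gsk p q (m+1)) d from rfl,
    coeff_bR_mul]
  set N : ℕ := ((degSum d : ℤ) - m).toNat + 1 with hNdef
  have hb2 : ((degSum d : ℤ) - (m+1)).toNat + 1 ≤ N := by
    have := Int.toNat_le_toNat (show (degSum d : ℤ) - (m+1) ≤ (degSum d : ℤ) - m by omega)
    omega
  rw [Gsk_eq_sum p q m d (N+1) (by omega), Gsk_eq_sum p q (m+1) d N hb2,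
    Finset.sum_range_succ']
  have e1 : ∀ s : ℕ,
      (-Polynomial.X : A) ^ (s+1) * MvPowerSeries.coeff (R := A) d (prodOneAdd q p * hsym q p (m + ↑(s+1)))
        = -(Polynomial.X * ((-Polynomial.X : A) ^ s
            * MvPowerSeries.coeff (R := A) d (prodOneAdd q p * hsym q p ((m+1) + ↑s)))) := by
    intro s
    have hcast : m + ((s+1 : ℕ) : ℤ) = (m+1) + (s : ℤ) := by push_cast; ring
    rw [hcast, pow_succ]
    ring
  rw [Finset.sum_congr rfl (fun s _ => e1 s), Finset.sum_neg_distrib, Finset.mul_sum]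
  simp only [pow_zero, Nat.cast_zero, add_zero, one_mul]
  rw [show (prodOneAdd q p * hsym q p m) d
    = MvPowerSeries.coeff (R := A) d (prodOneAdd q p * hsym q p m) from rfl]
  ring

/-- downward induction on degree: if `A_k + β A_{k+1} = 0` and each `A_k` vanishes in
degrees `< k`, then all `A_k = 0`. -/
lemma beta_cancel (F : ℤ → R)
    (hv : ∀ (k : ℤ) (d : ℕ →₀ ℕ), (degSum d : ℤ) < k → F k d = 0)
    (hrec : ∀ k : ℤ, F k + bR * F (k+1) = 0) : ∀ k : ℤ, F k = 0 := by
  have key : ∀ (n : ℕ) (k : ℤ) (d : ℕ →₀ ℕ), (degSum d : ℤ) < k + n → F k d = 0 := by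
    intro n
    induction n with
    | zero => intro k d h; exact hv k d (by omega)
    | succ n ih =>
      intro k d h
      by_cases h0 : (degSum d : ℤ) < k
      · exact hv k d h0
      · have h1 : F k d + (bR * F (k+1)) d = 0 := congrArg (fun G : R => G d) (hrec k)
        rw [coeff_bR_mul, ih (k+1) d (by omega)] at h1
        rw [mul_zero, add_zero] at h1
        exact h1
  intro k
  funext d
  apply key (((degSum d : ℤ) - k).toNat + 1) k d
  have := Int.self_le_toNat ((degSum d : ℤ) - k)
  omega

lemma prodOneAdd_succ (Q : ℕ) : prodOneAdd 1 (Q+1) = prodOneAdd 1 Q * (1 + bR * Xv (Q+1)) := by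
  rw [prodOneAdd, prodOneAdd, ← Finset.prod_Icc_succ_top (by omega : 1 ≤ Q + 1)]

lemma sOp_oneAdd (j i : ℕ) : sOp j (1 + bR * Xv i) = 1 + bR * Xv (Equiv.swap j (j+1) i) := by
  rw [sOp_add, sOp_one, sOp_bR_mul, sOp_X]

lemma sOp_prodOneAdd (Q : ℕ) : sOp (Q+1) (prodOneAdd 1 (Q+1))
    = prodOneAdd 1 Q * (1 + bR * Xv (Q+2)) := by
  rw [prodOneAdd_succ, sOp_mul, sOp_oneAdd, Equiv.swap_apply_left]
  congr 1
  rw [show sOp (Q+1) (prodOneAdd 1 Q) = sHom (Q+1) (prodOneAdd 1 Q) from rfl, prodOneAdd,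
    map_prod]
  apply Finset.prod_congr rfl
  intro i hi
  rw [Finset.mem_Icc] at hi
  rw [sHom_apply, sOp_oneAdd, Equiv.swap_apply_of_ne_of_ne (by omega) (by omega)]

/-- the identity (†) -/
lemma dagger (Q : ℕ) (m : ℤ) :
    (1 + bR * Xv (Q+2)) * (prodOneAdd 1 (Q+1) * hsym 1 (Q+1) m)
      - (1 + bR * Xv (Q+1)) * sOp (Q+1) (prodOneAdd 1 (Q+1) * hsym 1 (Q+1) m)
      = (Xv (Q+1) - Xv (Q+2)) * (prodOneAdd 1 (Q+2) * hsym 1 (Q+2) (m-1)) := by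
  have hswap := hsym_swap_identity (Q+1) (by omega) m
  rw [show Q+1+1 = Q+2 by omega] at hswap
  rw [sOp_mul, sOp_prodOneAdd,
    show prodOneAdd 1 (Q+2) = prodOneAdd 1 Q * (1 + bR * Xv (Q+1)) * (1 + bR * Xv (Q+2)) by
      rw [show Q+2 = (Q+1)+1 by omega, prodOneAdd_succ (Q+1), prodOneAdd_succ Q,
        show Q+1+1 = Q+2 by omega],
    prodOneAdd_succ Q]
  have expand : (1 + bR * Xv (Q+2)) * (prodOneAdd 1 Q * (1 + bR * Xv (Q+1)) * hsym 1 (Q+1) m)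
      - (1 + bR * Xv (Q+1)) * (prodOneAdd 1 Q * (1 + bR * Xv (Q+2)) * sOp (Q+1) (hsym 1 (Q+1) m))
      = (prodOneAdd 1 Q * (1 + bR * Xv (Q+1)) * (1 + bR * Xv (Q+2)))
        * (hsym 1 (Q+1) m - sOp (Q+1) (hsym 1 (Q+1) m)) := by ring
  rw [expand, ← hswap]
  ring

/-- the identity (★) -/
lemma star (Q : ℕ) (m : ℤ) :
    (1 + bR * Xv (Q+2)) * Gsk (Q+1) 1 m - (1 + bR * Xv (Q+1)) * sOp (Q+1) (Gsk (Q+1) 1 m)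
      - (Xv (Q+1) - Xv (Q+2)) * Gsk (Q+2) 1 (m-1) = 0 := by
  set E : ℤ → R := fun k =>
    (1 + bR * Xv (Q+2)) * Gsk (Q+1) 1 k - (1 + bR * Xv (Q+1)) * sOp (Q+1) (Gsk (Q+1) 1 k)
      - (Xv (Q+1) - Xv (Q+2)) * Gsk (Q+2) 1 (k-1) with hE
  have := beta_cancel E ?_ ?_ m
  · exact this
  · -- vanishing
    intro k d h
    have hv1 : ∀ (p' : ℕ) (k' : ℤ) (dd : ℕ →₀ ℕ), (degSum dd : ℤ) < k' →
        sOp (Q+1) (Gsk p' 1 k') dd = 0 := by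
      intro p' k' dd hdd
      rw [sOp_apply]
      exact Gsk_vanish _ _ _ _ (by rw [degSum_emd]; exact hdd)
    have hsub : ∀ (G : R) (i : ℕ), (∀ dd, (degSum dd : ℤ) < k - 1 → G dd = 0) →
        (if d i = 0 then 0 else G (d - Finsupp.single i 1)) = (0 : A) := by
      intro G i hG
      by_cases hz : d i = 0
      · simp [hz]
      · rw [if_neg hz]
        apply hG
        have := degSum_sub_single d i hz
        have hpos : 1 ≤ degSum d := le_trans (Nat.one_le_iff_ne_zero.mpr hz) (apply_le_degSum d i)
        omega
    rw [hE]
    show ((1 + bR * Xv (Q+2)) * Gsk (Q+1) 1 k) d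
        - ((1 + bR * Xv (Q+1)) * sOp (Q+1) (Gsk (Q+1) 1 k)) d
        - ((Xv (Q+1) - Xv (Q+2)) * Gsk (Q+2) 1 (k-1)) d = 0
    rw [coeff_oneAdd_mul, coeff_oneAdd_mul, coeff_subX_mul]
    rw [Gsk_vanish _ _ _ _ h, hv1 _ _ _ h]
    rw [hsub (Gsk (Q+1) 1 k) (Q+2) (fun dd hdd => Gsk_vanish _ _ _ _ (by omega)),
        hsub (sOp (Q+1) (Gsk (Q+1) 1 k)) (Q+1) (fun dd hdd => hv1 _ _ _ (by omega)),
        hsub (Gsk (Q+2) 1 (k-1)) (Q+1) (fun dd hdd => Gsk_vanish _ _ _ _ hdd),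
        hsub (Gsk (Q+2) 1 (k-1)) (Q+2) (fun dd hdd => Gsk_vanish _ _ _ _ hdd)]
    ring
  · -- recursion
    intro k
    have h1 := Gsk_telescope (Q+1) 1 k
    have h2 : sOp (Q+1) (Gsk (Q+1) 1 k) + bR * sOp (Q+1) (Gsk (Q+1) 1 (k+1))
        = sOp (Q+1) (prodOneAdd 1 (Q+1) * hsym 1 (Q+1) k) := by
      rw [← sOp_bR_mul, ← sOp_add, h1]
    have h3 := Gsk_telescope (Q+2) 1 (k-1)
    have expand : E k + bR * E (k+1)
        = (1 + bR * Xv (Q+2)) * (Gsk (Q+1) 1 k + bR * Gsk (Q+1) 1 (k+1))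
          - (1 + bR * Xv (Q+1))
            * (sOp (Q+1) (Gsk (Q+1) 1 k) + bR * sOp (Q+1) (Gsk (Q+1) 1 (k+1)))
          - (Xv (Q+1) - Xv (Q+2)) * (Gsk (Q+2) 1 (k-1) + bR * Gsk (Q+2) 1 (k+1-1)) := by
      rw [hE]; ring
    rw [show k + 1 - 1 = k - 1 + 1 by ring] at expand
    rw [expand, h1, h2, h3, sub_eq_zero]
    exact dagger Q k
end Aux4
section Aux5
open MvPowerSeries Finsupp Polynomial

lemma JT_hJ (p q : ℕ) (c m : ℤ) (dd : ℕ →₀ ℕ) (N : ℕ)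
    (hN : ((degSum dd : ℤ) - m).toNat + 1 ≤ N) :
    JT p q c m dd = ∑ s ∈ Finset.range N,
      (((intChoose c s : ℤ) : A) * Polynomial.X ^ s) * Gsk p q (m + s) dd := by
  simp only [JT, capp]
  apply Finset.sum_subset (Finset.range_subset_range.mpr hN)
  intro s _ hs
  rw [Gsk_vanish, mul_zero]
  rw [Finset.mem_range, not_lt] at hs
  have := Int.self_le_toNat ((degSum dd : ℤ) - m)
  omega

lemma sJT_hJ (i p q : ℕ) (c m : ℤ) (dd : ℕ →₀ ℕ) (N : ℕ)
    (hN : ((degSum dd : ℤ) - m).toNat + 1 ≤ N) :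
    sOp i (JT p q c m) dd = ∑ s ∈ Finset.range N,
      (((intChoose c s : ℤ) : A) * Polynomial.X ^ s) * (sOp i (Gsk p q (m + s))) dd := by
  rw [sOp_apply, JT_hJ p q c m _ N (by rw [degSum_emd]; exact hN)]
  exact Finset.sum_congr rfl (fun s _ => rfl)

lemma JTlike_mul_oneAdd (B : ℤ → R) (J : R) (cc : ℕ → A) (m : ℤ)
    (hJ : ∀ (dd : ℕ →₀ ℕ) (N : ℕ), ((degSum dd : ℤ) - m).toNat + 1 ≤ N →
      J dd = ∑ s ∈ Finset.range N, cc s * B (m + s) dd)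
    (i : ℕ) (d : ℕ →₀ ℕ) (N : ℕ) (hN : N = ((degSum d : ℤ) - m).toNat + 1) :
    ((1 + bR * Xv i) * J) d
      = ∑ s ∈ Finset.range N, cc s * ((1 + bR * Xv i) * B (m + s)) d := by
  rw [coeff_oneAdd_mul]
  by_cases hz : d i = 0
  · rw [if_pos hz, mul_zero, add_zero, hJ d N (by omega)]
    apply Finset.sum_congr rfl
    intro s _
    rw [coeff_oneAdd_mul, if_pos hz, mul_zero, add_zero]
  · rw [if_neg hz]
    have hdeg : degSum (d - Finsupp.single i 1) = degSum d - 1 := degSum_sub_single d i hz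
    have hpos : 1 ≤ degSum d := le_trans (Nat.one_le_iff_ne_zero.mpr hz) (apply_le_degSum d i)
    rw [hJ d N (by omega), hJ (d - Finsupp.single i 1) N (by omega)]
    rw [Finset.mul_sum, ← Finset.sum_add_distrib]
    apply Finset.sum_congr rfl
    intro s _
    rw [coeff_oneAdd_mul, if_neg hz]
    ring

lemma JTlike_mul_X (B : ℤ → R) (J : R) (cc : ℕ → A) (m' : ℤ)
    (hJ : ∀ (dd : ℕ →₀ ℕ) (N : ℕ), ((degSum dd : ℤ) - m').toNat + 1 ≤ N →
      J dd = ∑ s ∈ Finset.range N, cc s * B (m' + s) dd)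
    (i : ℕ) (d : ℕ →₀ ℕ) (N : ℕ) (hN : N = ((degSum d : ℤ) - (m' + 1)).toNat + 1) :
    (Xv i * J) d = ∑ s ∈ Finset.range N, cc s * (Xv i * B (m' + s)) d := by
  rw [coeff_Xv_mul]
  by_cases hz : d i = 0
  · rw [if_pos hz]
    symm
    apply Finset.sum_eq_zero
    intro s _
    rw [coeff_Xv_mul, if_pos hz, mul_zero]
  · rw [if_neg hz]
    have hdeg : degSum (d - Finsupp.single i 1) = degSum d - 1 := degSum_sub_single d i hz
    have hpos : 1 ≤ degSum d := le_trans (Nat.one_le_iff_ne_zero.mpr hz) (apply_le_degSum d i)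
    rw [hJ (d - Finsupp.single i 1) N (by omega)]
    apply Finset.sum_congr rfl
    intro s _
    rw [coeff_Xv_mul, if_neg hz]

/-- the key row identity (C) -/
lemma rowC (Q : ℕ) (c m : ℤ) :
    (1 + bR * Xv (Q+2)) * JT (Q+1) 1 c m
      - (1 + bR * Xv (Q+1)) * sOp (Q+1) (JT (Q+1) 1 c m)
      - (Xv (Q+1) - Xv (Q+2)) * JT (Q+2) 1 c (m-1) = 0 := by
  rw [sub_mul (Xv (Q+1)) (Xv (Q+2)) (JT (Q+2) 1 c (m-1))]
  funext d
  set N : ℕ := ((degSum d : ℤ) - m).toNat + 1 with hN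
  set cc : ℕ → A := fun s => ((intChoose c s : ℤ) : A) * Polynomial.X ^ s with hcc
  have T1 : ((1 + bR * Xv (Q+2)) * JT (Q+1) 1 c m) d
      = ∑ s ∈ Finset.range N, cc s * ((1 + bR * Xv (Q+2)) * Gsk (Q+1) 1 (m + s)) d :=
    JTlike_mul_oneAdd (Gsk (Q+1) 1) (JT (Q+1) 1 c m) cc m
      (fun dd N' h => JT_hJ (Q+1) 1 c m dd N' h) (Q+2) d N hN
  have T2 : ((1 + bR * Xv (Q+1)) * sOp (Q+1) (JT (Q+1) 1 c m)) d
      = ∑ s ∈ Finset.range N, cc s * ((1 + bR * Xv (Q+1)) * sOp (Q+1) (Gsk (Q+1) 1 (m + s))) d :=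
    JTlike_mul_oneAdd (fun k => sOp (Q+1) (Gsk (Q+1) 1 k)) (sOp (Q+1) (JT (Q+1) 1 c m)) cc m
      (fun dd N' h => sJT_hJ (Q+1) (Q+1) 1 c m dd N' h) (Q+1) d N hN
  have hNX : N = ((degSum d : ℤ) - ((m - 1) + 1)).toNat + 1 := by
    rw [hN]; congr 2; ring
  have T3a : (Xv (Q+1) * JT (Q+2) 1 c (m-1)) d
      = ∑ s ∈ Finset.range N, cc s * (Xv (Q+1) * Gsk (Q+2) 1 ((m-1) + s)) d :=
    JTlike_mul_X (Gsk (Q+2) 1) (JT (Q+2) 1 c (m-1)) cc (m-1)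
      (fun dd N' h => JT_hJ (Q+2) 1 c (m-1) dd N' h) (Q+1) d N hNX
  have T3b : (Xv (Q+2) * JT (Q+2) 1 c (m-1)) d
      = ∑ s ∈ Finset.range N, cc s * (Xv (Q+2) * Gsk (Q+2) 1 ((m-1) + s)) d :=
    JTlike_mul_X (Gsk (Q+2) 1) (JT (Q+2) 1 c (m-1)) cc (m-1)
      (fun dd N' h => JT_hJ (Q+2) 1 c (m-1) dd N' h) (Q+2) d N hNX
  show ((1 + bR * Xv (Q+2)) * JT (Q+1) 1 c m) d
      - ((1 + bR * Xv (Q+1)) * sOp (Q+1) (JT (Q+1) 1 c m)) d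
      - ((Xv (Q+1) * JT (Q+2) 1 c (m-1)) d - (Xv (Q+2) * JT (Q+2) 1 c (m-1)) d) = 0
  rw [T1, T2, T3a, T3b, ← Finset.sum_sub_distrib, ← Finset.sum_sub_distrib,
    ← Finset.sum_sub_distrib]
  apply Finset.sum_eq_zero
  intro s _
  have h := star Q (m + s)
  rw [show m + (s:ℤ) - 1 = (m - 1) + (s:ℤ) by ring,
    sub_mul (Xv (Q+1)) (Xv (Q+2)) (Gsk (Q+2) 1 ((m-1) + s))] at h
  have h' : ((1 + bR * Xv (Q+2)) * Gsk (Q+1) 1 (m + s)) d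
      - ((1 + bR * Xv (Q+1)) * sOp (Q+1) (Gsk (Q+1) 1 (m + s))) d
      - ((Xv (Q+1) * Gsk (Q+2) 1 ((m-1) + s)) d - (Xv (Q+2) * Gsk (Q+2) 1 ((m-1) + s)) d)
      = 0 := congrArg (fun G : R => G d) h
  calc cc s * ((1 + bR * Xv (Q+2)) * Gsk (Q+1) 1 (m + s)) d
        - cc s * ((1 + bR * Xv (Q+1)) * sOp (Q+1) (Gsk (Q+1) 1 (m + s))) d
        - (cc s * (Xv (Q+1) * Gsk (Q+2) 1 ((m-1) + s)) d
            - cc s * (Xv (Q+2) * Gsk (Q+2) 1 ((m-1) + s)) d)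
      = cc s * (((1 + bR * Xv (Q+2)) * Gsk (Q+1) 1 (m + s)) d
          - ((1 + bR * Xv (Q+1)) * sOp (Q+1) (Gsk (Q+1) 1 (m + s))) d
          - ((Xv (Q+1) * Gsk (Q+2) 1 ((m-1) + s)) d
              - (Xv (Q+2) * Gsk (Q+2) 1 ((m-1) + s)) d)) := by ring
    _ = 0 := by rw [h', mul_zero]
end Aux5
section Aux6
open MvPowerSeries Finsupp Polynomial

lemma swap_mem_Icc (i q' : ℕ) (hi : 1 ≤ i) (hq : i + 1 ≤ q') (k : ℕ) :
    (1 ≤ Equiv.swap i (i+1) k ∧ Equiv.swap i (i+1) k ≤ q') ↔ (1 ≤ k ∧ k ≤ q') := by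
  by_cases h1 : k = i
  · subst h1; rw [Equiv.swap_apply_left]; omega
  · by_cases h2 : k = i + 1
    · subst h2; rw [Equiv.swap_apply_right]; omega
    · rw [Equiv.swap_apply_of_ne_of_ne h1 h2]

lemma sOp_hsym_invariant (i q' : ℕ) (hi : 1 ≤ i) (hq : i + 1 ≤ q') (j : ℤ) :
    sOp i (hsym 1 q' j) = hsym 1 q' j := by
  funext d
  rw [sOp_apply]
  simp only [hsym]
  set e := Equiv.swap i (i+1) with he
  have hdege : degSum (Finsupp.equivMapDomain e d) = degSum d := degSum_emd e d
  have happ : ∀ k, (Finsupp.equivMapDomain e d) k = d (e k) := by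
    intro k
    rw [Finsupp.equivMapDomain_apply, he, Equiv.symm_swap]
  congr 1
  simp only [eq_iff_iff, hdege]
  have hsupR : ∀ (x : ℕ →₀ ℕ),
      (∀ k ∈ x.support, 1 ≤ k ∧ k ≤ q') ↔ (∀ k, x k ≠ 0 → 1 ≤ k ∧ k ≤ q') := by
    intro x
    constructor
    · intro h k hk; exact h k (Finsupp.mem_support_iff.mpr hk)
    · intro h k hk; exact h k (Finsupp.mem_support_iff.mp hk)
  rw [hsupR, hsupR]
  constructor
  · rintro ⟨h1, h2⟩
    refine ⟨fun k hk => ?_, h2⟩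
    have := h1 (e k) (by rw [happ, he]; rw [Equiv.swap_apply_self]; exact hk)
    rw [← swap_mem_Icc i q' hi hq k, ← he]
    exact this
  · rintro ⟨h1, h2⟩
    refine ⟨fun k hk => ?_, h2⟩
    rw [happ] at hk
    have := h1 (e k) hk
    rw [he, swap_mem_Icc i q' hi hq k] at this
    exact this

lemma sOp_prodOneAdd_invariant (i q' : ℕ) (hi : 1 ≤ i) (hq : i + 1 ≤ q') :
    sOp i (prodOneAdd 1 q') = prodOneAdd 1 q' := by
  rw [show sOp i (prodOneAdd 1 q') = sHom i (prodOneAdd 1 q') from rfl]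
  simp only [prodOneAdd]
  rw [map_prod]
  have step : ∀ j ∈ Finset.Icc 1 q', sHom i (1 + bR * Xv j) = 1 + bR * Xv (Equiv.swap i (i+1) j) :=
    fun j _ => sOp_oneAdd i j
  rw [Finset.prod_congr rfl step]
  apply Finset.prod_equiv (Equiv.swap i (i+1))
  · intro k
    simp only [Finset.mem_Icc]
    exact (swap_mem_Icc i q' hi hq k).symm
  · intro k _
    rfl

lemma sOp_Gsk_invariant (i q' : ℕ) (hi : 1 ≤ i) (hq : i + 1 ≤ q') (k : ℤ) :
    sOp i (Gsk q' 1 k) = Gsk q' 1 k := by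
  funext d
  rw [sOp_apply]
  simp only [Gsk, degSum_emd]
  apply Finset.sum_congr rfl
  intro s _
  congr 1
  rw [capp, capp]
  rw [show (prodOneAdd 1 q' * hsym 1 q' (k + s)) (Finsupp.equivMapDomain (Equiv.swap i (i+1)) d)
      = sOp i (prodOneAdd 1 q' * hsym 1 q' (k + s)) d from rfl,
    sOp_mul, sOp_prodOneAdd_invariant i q' hi hq, sOp_hsym_invariant i q' hi hq]

lemma sOp_JT_invariant (i q' : ℕ) (hi : 1 ≤ i) (hq : i + 1 ≤ q') (c m : ℤ) :
    sOp i (JT q' 1 c m) = JT q' 1 c m := by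
  funext d
  rw [sOp_apply]
  simp only [JT, degSum_emd, capp]
  apply Finset.sum_congr rfl
  intro s _
  congr 1
  rw [show Gsk q' 1 (m + s) (Finsupp.equivMapDomain (Equiv.swap i (i+1)) d)
      = sOp i (Gsk q' 1 (m + s)) d from rfl, sOp_Gsk_invariant i q' hi hq]

lemma Xv_ne (i : ℕ) : Xv i - Xv (i+1) ≠ 0 := by
  intro h
  have h2 : Xv i (Finsupp.single i 1) = Xv (i+1) (Finsupp.single i 1) := by
    have h3 : (Xv i - Xv (i+1)) (Finsupp.single i 1)
        = Xv i (Finsupp.single i 1) - Xv (i+1) (Finsupp.single i 1) := rfl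
    rw [h] at h3
    have h4 : (0 : A) = Xv i (Finsupp.single i 1) - Xv (i+1) (Finsupp.single i 1) := h3
    exact sub_eq_zero.mp h4.symm
  rw [show Xv i (Finsupp.single i 1) = MvPowerSeries.coeff (R := A) (Finsupp.single i 1) (MvPowerSeries.X i) from rfl,
    show Xv (i+1) (Finsupp.single i 1) = MvPowerSeries.coeff (R := A) (Finsupp.single i 1) (MvPowerSeries.X (i+1)) from rfl,
    MvPowerSeries.coeff_X, MvPowerSeries.coeff_X] at h2
  rw [if_pos rfl, if_neg] at h2
  · exact one_ne_zero h2
  · intro heq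
    have := congrArg (fun g : ℕ →₀ ℕ => g i) heq
    simp at this

lemma ddiff_eq (i : ℕ) (F G : R)
    (h : (Xv i - Xv (i+1)) * G = (1 + bR * Xv (i+1)) * F - (1 + bR * Xv i) * sOp i F) :
    ddiff i F = G := by
  rw [ddiff]
  have hex : ∃ gq : R, (Xv i - Xv (i+1)) * gq
      = (1 + bR * Xv (i+1)) * F - (1 + bR * Xv i) * sOp i F := ⟨G, h⟩
  have hspec := Classical.epsilon_spec hex
  exact mul_left_cancel₀ (Xv_ne i) (hspec.trans h.symm)
end Aux6
theorem stmt5 (r : ℕ) (hr : 0 < r) (lam f : Fin r → ℕ)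
    (hlam_anti : ∀ i j : Fin r, i ≤ j → lam j ≤ lam i) (hlam_pos : ∀ i, 0 < lam i)
    (hf_mono : ∀ i j : Fin r, i ≤ j → f i ≤ f j) (hf_pos : ∀ i, 0 < f i)
    (hlam1 : ∀ h : 1 < r, lam ⟨1, h⟩ < lam ⟨0, hr⟩)
    (hf1 : ∀ h : 1 < r, f ⟨0, hr⟩ < f ⟨1, h⟩) :
    ddiff (f ⟨0, hr⟩) (Gtilde r lam f) =
      Gtilde r (Function.update lam ⟨0, hr⟩ (lam ⟨0, hr⟩ - 1))
        (Function.update f ⟨0, hr⟩ (f ⟨0, hr⟩ + 1)) := by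
  have hp1 : 1 ≤ f ⟨0, hr⟩ := hf_pos _
  obtain ⟨Q, hQ⟩ : ∃ Q, f ⟨0, hr⟩ = Q + 1 := ⟨f ⟨0, hr⟩ - 1, by omega⟩
  set i0 : Fin r := ⟨0, hr⟩ with hi0
  set lam' := Function.update lam i0 (lam i0 - 1) with hlam'
  set f' := Function.update f i0 (f i0 + 1) with hf'2
  set M : Matrix (Fin r) (Fin r) R := Matrix.of fun i j : Fin r =>
    JT (f i) 1 ((i : ℤ) - (j : ℤ)) ((lam i : ℤ) - ((0:ℕ) : ℤ) + (j : ℤ) - (i : ℤ)) with hMd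
  set M' : Matrix (Fin r) (Fin r) R := Matrix.of fun i j : Fin r =>
    JT (f' i) 1 ((i : ℤ) - (j : ℤ)) ((lam' i : ℤ) - ((0:ℕ) : ℤ) + (j : ℤ) - (i : ℤ)) with hMd'
  have hGt : Gtilde r lam f = M.det := rfl
  have hGt' : Gtilde r lam' f' = M'.det := rfl
  apply ddiff_eq
  rw [hGt, hGt']
  have hr1 : ∀ i : Fin r, i ≠ i0 → (f i0) + 1 ≤ f i := by
    intro i hne
    have hons : 0 < (i : ℕ) := by
      rcases Nat.eq_zero_or_pos (i : ℕ) with h | h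
      · exact absurd (Fin.ext h : i = i0) hne
      · exact h
    have h1 : 1 < r := lt_of_le_of_lt hons i.2
    have h2 : f ⟨1, h1⟩ ≤ f i := hf_mono ⟨1, h1⟩ i (by rw [Fin.le_def]; exact hons)
    have h3 := hf1 h1
    omega
  have hsdet : sOp (f i0) M.det = (M.map (sOp (f i0))).det := by
    rw [show sOp (f i0) M.det = sHom (f i0) M.det from rfl, RingHom.map_det]
    rfl
  have hMup : M = M'.updateRow i0 (fun j => M i0 j) := by
    funext i j
    by_cases hii : i = i0
    · subst hii; simp [Matrix.updateRow_self]
    · rw [Matrix.updateRow_ne hii]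
      show JT (f i) 1 _ _ = JT (f' i) 1 _ _
      rw [hf'2, Function.update_of_ne hii, hlam', Function.update_of_ne hii]
  have hsMup : M.map (sOp (f i0)) = M'.updateRow i0 (fun j => sOp (f i0) (M i0 j)) := by
    funext i j
    by_cases hii : i = i0
    · subst hii; simp [Matrix.updateRow_self, Matrix.map_apply]
    · rw [Matrix.updateRow_ne hii, Matrix.map_apply]
      have hinv := sOp_JT_invariant (f i0) (f i) (hf_pos i0) (hr1 i hii)
        ((i : ℤ) - (j : ℤ)) ((lam i : ℤ) - ((0:ℕ) : ℤ) + (j : ℤ) - (i : ℤ))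
      rw [show M i j = JT (f i) 1 ((i : ℤ) - (j : ℤ))
          ((lam i : ℤ) - ((0:ℕ) : ℤ) + (j : ℤ) - (i : ℤ)) from rfl, hinv]
      show JT (f i) 1 _ _ = JT (f' i) 1 _ _
      rw [hf'2, Function.update_of_ne hii, hlam', Function.update_of_ne hii]
  have hrow : ∀ j : Fin r, (Xv (f i0) - Xv (f i0 + 1)) * M' i0 j
      = (1 + bR * Xv (f i0 + 1)) * M i0 j - (1 + bR * Xv (f i0)) * sOp (f i0) (M i0 j) := by
    intro j
    have hM0 : M i0 j = JT (Q+1) 1 ((i0 : ℤ) - (j : ℤ))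
        ((lam i0 : ℤ) - ((0:ℕ) : ℤ) + (j : ℤ) - (i0 : ℤ)) := by
      rw [show M i0 j = JT (f i0) 1 ((i0 : ℤ) - (j : ℤ))
          ((lam i0 : ℤ) - ((0:ℕ) : ℤ) + (j : ℤ) - (i0 : ℤ)) from rfl, hQ]
    have hM'0 : M' i0 j = JT (Q+2) 1 ((i0 : ℤ) - (j : ℤ))
        (((lam i0 : ℤ) - ((0:ℕ) : ℤ) + (j : ℤ) - (i0 : ℤ)) - 1) := by
      rw [show M' i0 j = JT (f' i0) 1 ((i0 : ℤ) - (j : ℤ))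
          ((lam' i0 : ℤ) - ((0:ℕ) : ℤ) + (j : ℤ) - (i0 : ℤ)) from rfl,
        hf'2, Function.update_self, hQ, hlam', Function.update_self]
      congr 1
      have hlp := hlam_pos i0
      have hcast : ((lam i0 - 1 : ℕ) : ℤ) = (lam i0 : ℤ) - 1 := by omega
      rw [hcast]
      ring
    rw [hM0, hM'0, hQ, show Q+1+1 = Q+2 by omega]
    have h := rowC Q ((i0 : ℤ) - (j : ℤ)) ((lam i0 : ℤ) - ((0:ℕ) : ℤ) + (j : ℤ) - (i0 : ℤ))
    exact (sub_eq_zero.mp h).symm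
  have e1 : (M'.updateRow i0 ((Xv (f i0) - Xv (f i0 + 1)) • (fun j => M' i0 j))).det
      = (Xv (f i0) - Xv (f i0 + 1)) * M'.det := by
    rw [Matrix.det_updateRow_smul]
    congr 1
    rw [show (fun j => M' i0 j) = M' i0 from rfl, Matrix.updateRow_eq_self]
  have e2 : ((Xv (f i0) - Xv (f i0 + 1)) • (fun j => M' i0 j))
      = (1 + bR * Xv (f i0 + 1)) • (fun j => M i0 j)
        + (-(1 + bR * Xv (f i0))) • (fun j => sOp (f i0) (M i0 j)) := by
    funext j
    simp only [Pi.smul_apply, Pi.add_apply, smul_eq_mul]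
    rw [hrow j]
    ring
  have e3 : (M'.updateRow i0 ((1 + bR * Xv (f i0 + 1)) • (fun j => M i0 j)
        + (-(1 + bR * Xv (f i0))) • (fun j => sOp (f i0) (M i0 j)))).det
      = (1 + bR * Xv (f i0 + 1)) * (M'.updateRow i0 (fun j => M i0 j)).det
        + (-(1 + bR * Xv (f i0))) * (M'.updateRow i0 (fun j => sOp (f i0) (M i0 j))).det := by
    rw [Matrix.det_updateRow_add, Matrix.det_updateRow_smul, Matrix.det_updateRow_smul]
  rw [← e1, e2, e3, ← hMup, ← hsMup, ← hsdet]
  ring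

end
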